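/- For all integers g₁, g₂ ≥ 3, the coefficient of X³ in the polynomial representing P₁₂(g₁,g₂) is 2(g₁ + g₂); that is, the third Betti number of the component M₁₂ equals twice the arithmetic genus of the nodal curve. -/

import Mathlib

open Polynomial

/-- `Q_g = ((1+X³)^{2g} − X^{2g}(1+X)^{2g}) / ((1−X²)(1−X⁴))` in `ℚ(X)`:
the Harder–Narasimhan Poincaré polynomial of the moduli space of rank-2 stable
bundles of fixed odd-degree determinant on a smooth projective curve of genus `g`. -/
noncomputable def Qg (g : ℕ) : RatFunc ℚ :=
  ((1 + RatFunc.X ^ 3) ^ (2 * g) - RatFunc.X ^ (2 * g) * (1 + RatFunc.X) ^ (2 * g)) /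
    ((1 - RatFunc.X ^ 2) * (1 - RatFunc.X ^ 4))

/-- `J_g = (1+X)^{2g}`, the Poincaré polynomial of the Jacobian. -/
noncomputable def Jg (g : ℕ) : RatFunc ℚ := (1 + RatFunc.X) ^ (2 * g)

/-- `Pⁿ = 1 + X² + ⋯ + X^{2n}`, the Poincaré polynomial of `ℙⁿ`. -/
noncomputable def Pn (n : ℕ) : RatFunc ℚ := ∑ i ∈ Finset.range (n + 1), RatFunc.X ^ (2 * i)

/-- `K_g = 1 + X^{2g} + Σ_{0<i<2g, i even} (C(2g,i) + 2^{2g}) X^i`,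
the Poincaré polynomial of the desingularized Kummer variety. -/
noncomputable def Kg (g : ℕ) : RatFunc ℚ :=
  1 + RatFunc.X ^ (2 * g) +
    ∑ i ∈ (Finset.Ioo 0 (2 * g)).filter (fun i => Even i),
      (((2 * g).choose i : RatFunc ℚ) + 2 ^ (2 * g)) * RatFunc.X ^ i

/-- `β̃₁` from Theorem 4.2 of the paper. -/
noncomputable def betaT1 (g₂ : ℕ) : RatFunc ℚ :=
  Kg g₂ * RatFunc.X ^ (4 * g₂ - 4) / (1 + RatFunc.X ^ 2) +
    Jg g₂ * (RatFunc.X ^ (4 * g₂ - 2) / (1 - RatFunc.X ^ 4) +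
      Pn (g₂ - 2) * RatFunc.X ^ (2 * g₂ - 2)) -
    2 ^ (2 * g₂) * Pn (g₂ - 1) * RatFunc.X ^ (4 * g₂ - 2) / (1 + RatFunc.X ^ 2) -
    2 ^ (2 * g₂) * (RatFunc.X ^ (6 * g₂ - 2) / (1 - RatFunc.X ^ 4) +
      Pn (g₂ - 2) * RatFunc.X ^ (4 * g₂ - 2))

/-- `β̃₂` from Theorem 4.2 of the paper. -/
noncomputable def betaT2 (g₂ : ℕ) : RatFunc ℚ :=
  2 ^ (2 * g₂) * (RatFunc.X ^ (6 * g₂) / (1 - RatFunc.X ^ 4) +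
    RatFunc.X ^ (4 * g₂ - 2) * Pn (g₂ - 1))

/-- `P₁₂(g₁,g₂) ∈ ℚ(X)`, the Poincaré polynomial of the component `M₁₂` of the moduli
space of rank-2 stable torsion-free sheaves with fixed determinant on a nodal curve
`X₁ ∪ X₂` whose smooth components have genera `g₁, g₂` (Theorem 4.2 of the paper). -/
noncomputable def P12 (g₁ g₂ : ℕ) : RatFunc ℚ :=
  Qg g₁ * (1 - RatFunc.X ^ 4) *
      (Qg g₂ + Jg g₂ * RatFunc.X ^ (2 * g₂) / (1 - RatFunc.X ^ 4) - (betaT1 g₂ + betaT2 g₂)) +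
    Qg g₁ * 2 ^ (2 * g₂) *
      (RatFunc.X ^ (6 * g₂) + RatFunc.X ^ (4 * g₂ - 2) * (1 - RatFunc.X ^ 4) * Pn (g₂ - 1)) +
    Qg g₁ *
      (Kg g₂ * RatFunc.X ^ (4 * g₂ - 4) * (1 - RatFunc.X ^ 2) +
        Jg g₂ * (RatFunc.X ^ (4 * g₂ - 2) +
          RatFunc.X ^ (2 * g₂ - 2) * (1 - RatFunc.X ^ 4) * Pn (g₂ - 2)) -
        2 ^ (2 * g₂) *
          (RatFunc.X ^ (6 * g₂ - 2) +
            RatFunc.X ^ (4 * g₂ - 2) * (1 - RatFunc.X ^ 4) * Pn (g₂ - 2) +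
            RatFunc.X ^ (4 * g₂ - 2) * (1 - RatFunc.X ^ 2) * Pn (g₂ - 1))) +
    Qg g₁ * Qg g₂ * RatFunc.X ^ 2 * (1 + 2 * RatFunc.X ^ 2 + RatFunc.X ^ 4)

noncomputable abbrev aM : ℚ[X] →+* RatFunc ℚ := algebraMap ℚ[X] (RatFunc ℚ)

/-- regular at 0 -/
def Reg (f : RatFunc ℚ) : Prop := ∃ a b : ℚ[X], b.coeff 0 ≠ 0 ∧ f * aM b = aM a

lemma Reg_aM (a : ℚ[X]) : Reg (aM a) := ⟨a, 1, by simp, by simp⟩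

lemma Reg_X : Reg RatFunc.X := by rw [← RatFunc.algebraMap_X (K := ℚ)]; exact Reg_aM X

lemma Reg_one : Reg 1 := by simpa using Reg_aM 1

lemma Reg_ofNat (n : ℕ) [n.AtLeastTwo] : Reg (OfNat.ofNat n : RatFunc ℚ) := by
  rw [← map_ofNat aM n]; exact Reg_aM _

lemma Reg_mul {f g : RatFunc ℚ} (hf : Reg f) (hg : Reg g) : Reg (f * g) := by
  obtain ⟨a, b, hb, hab⟩ := hf
  obtain ⟨c, d, hd, hcd⟩ := hg
  refine ⟨a * c, b * d, by simpa using mul_ne_zero hb hd, ?_⟩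
  rw [map_mul, map_mul]
  calc f * g * (aM b * aM d) = (f * aM b) * (g * aM d) := by ring
  _ = aM a * aM c := by rw [hab, hcd]

lemma Reg_add {f g : RatFunc ℚ} (hf : Reg f) (hg : Reg g) : Reg (f + g) := by
  obtain ⟨a, b, hb, hab⟩ := hf
  obtain ⟨c, d, hd, hcd⟩ := hg
  refine ⟨a * d + c * b, b * d, by simpa using mul_ne_zero hb hd, ?_⟩
  rw [map_mul, map_add, map_mul, map_mul]
  calc (f + g) * (aM b * aM d) = (f * aM b) * aM d + (g * aM d) * aM b := by ring
  _ = _ := by rw [hab, hcd]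

lemma Reg_neg {f : RatFunc ℚ} (hf : Reg f) : Reg (-f) := by
  obtain ⟨a, b, hb, hab⟩ := hf
  exact ⟨-a, b, hb, by rw [map_neg, neg_mul, hab]⟩

lemma Reg_sub {f g : RatFunc ℚ} (hf : Reg f) (hg : Reg g) : Reg (f - g) := by
  simpa [sub_eq_add_neg] using Reg_add hf (Reg_neg hg)

lemma Reg_pow {f : RatFunc ℚ} (hf : Reg f) (n : ℕ) : Reg (f ^ n) := by
  induction n with
  | zero => simpa using Reg_one
  | succ n ih => rw [pow_succ]; exact Reg_mul ih hf

lemma Reg_sum {ι : Type*} {s : Finset ι} {f : ι → RatFunc ℚ} (h : ∀ i ∈ s, Reg (f i)) :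
    Reg (∑ i ∈ s, f i) := by
  classical
  induction s using Finset.induction with
  | empty => simpa using Reg_aM 0
  | insert _ _ hx ih =>
      rw [Finset.sum_insert hx]
      exact Reg_add (h _ (Finset.mem_insert_self _ _))
        (ih fun i hi => h i (Finset.mem_insert_of_mem hi))

lemma Reg_natCast (n : ℕ) : Reg (n : RatFunc ℚ) := by simpa using Reg_aM (n : ℚ[X])

lemma Reg_div {f : RatFunc ℚ} (hf : Reg f) {c : ℚ[X]} (hc : c.coeff 0 ≠ 0) :
    Reg (f / aM c) := by
  obtain ⟨a, b, hb, hab⟩ := hf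
  have hc0 : c ≠ 0 := fun h => hc (by simp [h])
  have hC : aM c ≠ 0 := by
    simpa using (RatFunc.algebraMap_ne_zero hc0)
  refine ⟨a, b * c, by simpa using mul_ne_zero hb hc, ?_⟩
  rw [map_mul]
  field_simp
  linear_combination hab

-- denominator casts
lemma cast_d1 : (1 + RatFunc.X ^ 2 : RatFunc ℚ) = aM (1 + X ^ 2) := by
  simp [map_add, map_pow, RatFunc.algebraMap_X]
lemma cast_d2 : (1 - RatFunc.X ^ 4 : RatFunc ℚ) = aM (1 - X ^ 4) := by
  simp [map_sub, map_pow, RatFunc.algebraMap_X]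
lemma cast_d3 : ((1 - RatFunc.X ^ 2) * (1 - RatFunc.X ^ 4) : RatFunc ℚ)
    = aM ((1 - X ^ 2) * (1 - X ^ 4)) := by
  simp [map_mul, map_sub, map_pow, RatFunc.algebraMap_X]
lemma coeff0_d1 : ((1 + X ^ 2 : ℚ[X])).coeff 0 ≠ 0 := by simp
lemma coeff0_d2 : ((1 - X ^ 4 : ℚ[X])).coeff 0 ≠ 0 := by simp [coeff_one]
lemma coeff0_d3 : (((1 - X ^ 2) * (1 - X ^ 4) : ℚ[X])).coeff 0 ≠ 0 := by
  rw [Polynomial.mul_coeff_zero]; simp [coeff_one]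


lemma Reg_Jg (g : ℕ) : Reg (Jg g) := Reg_pow (Reg_add Reg_one Reg_X) _
lemma Reg_Pn (n : ℕ) : Reg (Pn n) := Reg_sum fun i _ => Reg_pow Reg_X _
lemma Reg_Kg (g : ℕ) : Reg (Kg g) :=
  Reg_add (Reg_add Reg_one (Reg_pow Reg_X _))
    (Reg_sum fun i _ => Reg_mul (Reg_add (Reg_natCast _) (Reg_pow (Reg_ofNat 2) _))
      (Reg_pow Reg_X _))
lemma Reg_Qg (g : ℕ) : Reg (Qg g) := by
  rw [Qg, cast_d3]
  exact Reg_div (Reg_sub (Reg_pow (Reg_add Reg_one (Reg_pow Reg_X 3)) _)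
    (Reg_mul (Reg_pow Reg_X _) (Reg_pow (Reg_add Reg_one Reg_X) _))) coeff0_d3

/-- order ≥ 4 at 0 -/
def Md (f : RatFunc ℚ) : Prop := ∃ r, Reg r ∧ f = RatFunc.X ^ 4 * r

lemma Md_add {f g : RatFunc ℚ} (hf : Md f) (hg : Md g) : Md (f + g) := by
  obtain ⟨r, hr, rfl⟩ := hf; obtain ⟨s, hs, rfl⟩ := hg
  exact ⟨r + s, Reg_add hr hs, by ring⟩
lemma Md_neg {f : RatFunc ℚ} (hf : Md f) : Md (-f) := by
  obtain ⟨r, hr, rfl⟩ := hf; exact ⟨-r, Reg_neg hr, by ring⟩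
lemma Md_sub {f g : RatFunc ℚ} (hf : Md f) (hg : Md g) : Md (f - g) := by
  simpa [sub_eq_add_neg] using Md_add hf (Md_neg hg)
lemma Md_mul_left {f g : RatFunc ℚ} (hg : Reg g) (hf : Md f) : Md (g * f) := by
  obtain ⟨r, hr, rfl⟩ := hf; exact ⟨g * r, Reg_mul hg hr, by ring⟩
lemma Md_mul_right {f g : RatFunc ℚ} (hf : Md f) (hg : Reg g) : Md (f * g) := by
  obtain ⟨r, hr, rfl⟩ := hf; exact ⟨r * g, Reg_mul hr hg, by ring⟩
lemma Md_of_eq {f g : RatFunc ℚ} (hf : Md f) (h : f = g) : Md g := h ▸ hf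

lemma dvd_aux (n : ℕ) : (X ^ 4 : ℚ[X]) ∣ (1 + X ^ 3) ^ n - 1 - (n : ℚ[X]) * X ^ 3 := by
  induction n with
  | zero => simp
  | succ n ih =>
      obtain ⟨c, hc⟩ := ih
      refine ⟨c * (1 + X ^ 3) + (n : ℚ[X]) * X ^ 2, ?_⟩
      have : (1 + X ^ 3 : ℚ[X]) ^ (n + 1) = ((1 + X ^ 3) ^ n - 1 - (n : ℚ[X]) * X ^ 3)
          * (1 + X ^ 3) + (1 + (n : ℚ[X]) * X ^ 3) * (1 + X ^ 3) := by ring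
      rw [this, hc]
      push_cast
      ring

lemma aM_d3_ne : aM ((1 - X ^ 2) * (1 - X ^ 4)) ≠ 0 :=
  RatFunc.algebraMap_ne_zero (fun h => coeff0_d3 (by rw [h]; simp))

lemma mdQ (g : ℕ) (hg : 3 ≤ g) :
    Md (Qg g - aM (1 + X ^ 2 + ((2 * g : ℕ) : ℚ[X]) * X ^ 3)) := by
  obtain ⟨k, rfl⟩ : ∃ k, g = k + 3 := ⟨g - 3, by omega⟩
  set q : ℚ[X] := 1 + X ^ 2 + ((2 * (k + 3) : ℕ) : ℚ[X]) * X ^ 3 with hq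
  set d : ℚ[X] := (1 - X ^ 2) * (1 - X ^ 4) with hd
  set Num : ℚ[X] := (1 + X ^ 3) ^ (2 * (k + 3)) - X ^ (2 * (k + 3)) * (1 + X) ^ (2 * (k + 3))
    with hNum
  have dvd2 : (X ^ 4 : ℚ[X]) ∣ X ^ (2 * (k + 3)) * (1 + X) ^ (2 * (k + 3)) :=
    ⟨X ^ (2 * k + 2) * (1 + X) ^ (2 * (k + 3)), by
      rw [show 2 * (k + 3) = 4 + (2 * k + 2) by omega]; ring⟩
  have dvd3 : (X ^ 4 : ℚ[X]) ∣ q * d - 1 - ((2 * (k + 3) : ℕ) : ℚ[X]) * X ^ 3 :=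
    ⟨-2 - ((2 * (k + 3) : ℕ) : ℚ[X]) * X - ((2 * (k + 3) : ℕ) : ℚ[X]) * X ^ 3 + X ^ 4
      + ((2 * (k + 3) : ℕ) : ℚ[X]) * X ^ 5, by rw [hq, hd]; ring⟩
  have dvdN : (X ^ 4 : ℚ[X]) ∣ Num - q * d := by
    have h1 := dvd_aux (2 * (k + 3))
    have : Num - q * d = ((1 + X ^ 3) ^ (2 * (k + 3)) - 1 - ((2 * (k + 3) : ℕ) : ℚ[X]) * X ^ 3)
        - (X ^ (2 * (k + 3)) * (1 + X) ^ (2 * (k + 3)))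
        - (q * d - 1 - ((2 * (k + 3) : ℕ) : ℚ[X]) * X ^ 3) := by ring
    rw [this]
    exact dvd_sub (dvd_sub h1 dvd2) dvd3
  obtain ⟨c, hc⟩ := dvdN
  have hQg : Qg (k + 3) = aM Num / aM d := by
    rw [Qg, hNum, hd, cast_d3]
    simp only [← RatFunc.algebraMap_X (K := ℚ), ← map_pow, ← map_add, ← map_mul, ← map_sub,
      ← map_one aM]
  have key : Qg (k + 3) - aM q = aM (Num - q * d) / aM d := by
    rw [hQg, div_sub' aM_d3_ne]
    congr 1
    simp only [← map_mul, ← map_sub]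
    congr 1
    rw [hNum]
    ring
  rw [key, hc]
  refine ⟨aM c / aM d, Reg_div (Reg_aM c) coeff0_d3, ?_⟩
  rw [map_mul, map_pow, RatFunc.algebraMap_X, mul_div_assoc]


lemma mdB1 (b : ℕ) : Md (betaT1 (b + 3)) := by
  refine ⟨Kg (b + 3) * RatFunc.X ^ (4 * b + 4) / (1 + RatFunc.X ^ 2)
    + Jg (b + 3) * (RatFunc.X ^ (4 * b + 6) / (1 - RatFunc.X ^ 4)
        + Pn (b + 1) * RatFunc.X ^ (2 * b))
    - 2 ^ (2 * (b + 3)) * Pn (b + 2) * RatFunc.X ^ (4 * b + 6) / (1 + RatFunc.X ^ 2)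
    - 2 ^ (2 * (b + 3)) * (RatFunc.X ^ (6 * b + 12) / (1 - RatFunc.X ^ 4)
        + Pn (b + 1) * RatFunc.X ^ (4 * b + 6)), ?_, ?_⟩
  · rw [cast_d1, cast_d2]
    refine Reg_sub (Reg_sub (Reg_add ?_ ?_) ?_) ?_
    · exact Reg_div (Reg_mul (Reg_Kg _) (Reg_pow Reg_X _)) coeff0_d1
    · exact Reg_mul (Reg_Jg _) (Reg_add (Reg_div (Reg_pow Reg_X _) coeff0_d2)
        (Reg_mul (Reg_Pn _) (Reg_pow Reg_X _)))
    · exact Reg_div (Reg_mul (Reg_mul (Reg_pow (Reg_ofNat 2) _) (Reg_Pn _))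
        (Reg_pow Reg_X _)) coeff0_d1
    · exact Reg_mul (Reg_pow (Reg_ofNat 2) _) (Reg_add (Reg_div (Reg_pow Reg_X _) coeff0_d2)
        (Reg_mul (Reg_Pn _) (Reg_pow Reg_X _)))
  · rw [betaT1, show 4 * (b + 3) - 4 = 4 * b + 8 by omega,
      show 4 * (b + 3) - 2 = 4 * b + 10 by omega, show 2 * (b + 3) - 2 = 2 * b + 4 by omega,
      show 6 * (b + 3) - 2 = 6 * b + 16 by omega, show b + 3 - 2 = b + 1 by omega,
      show b + 3 - 1 = b + 2 by omega]
    ring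

lemma mdB2 (b : ℕ) : Md (betaT2 (b + 3)) := by
  refine ⟨2 ^ (2 * (b + 3)) * (RatFunc.X ^ (6 * b + 14) / (1 - RatFunc.X ^ 4)
      + RatFunc.X ^ (4 * b + 6) * Pn (b + 2)), ?_, ?_⟩
  · rw [cast_d2]
    exact Reg_mul (Reg_pow (Reg_ofNat 2) _) (Reg_add (Reg_div (Reg_pow Reg_X _) coeff0_d2)
      (Reg_mul (Reg_pow Reg_X _) (Reg_Pn _)))
  · rw [betaT2, show 6 * (b + 3) = 6 * b + 18 by omega,
      show 4 * (b + 3) - 2 = 4 * b + 10 by omega, show b + 3 - 1 = b + 2 by omega]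
    ring


lemma mdA (b : ℕ) : Md (Jg (b + 3) * RatFunc.X ^ (2 * (b + 3)) / (1 - RatFunc.X ^ 4)) := by
  refine ⟨Jg (b + 3) * RatFunc.X ^ (2 * b + 2) / (1 - RatFunc.X ^ 4), ?_, ?_⟩
  · rw [cast_d2]; exact Reg_div (Reg_mul (Reg_Jg _) (Reg_pow Reg_X _)) coeff0_d2
  · rw [show 2 * (b + 3) = 2 * b + 6 by omega]; ring

lemma mdT2i (b : ℕ) : Md (RatFunc.X ^ (6 * (b + 3)) +
    RatFunc.X ^ (4 * (b + 3) - 2) * (1 - RatFunc.X ^ 4) * Pn (b + 3 - 1)) := by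
  refine ⟨RatFunc.X ^ (6 * b + 14) + RatFunc.X ^ (4 * b + 6) * (1 - RatFunc.X ^ 4) * Pn (b + 2),
    ?_, ?_⟩
  · rw [cast_d2]
    exact Reg_add (Reg_pow Reg_X _)
      (Reg_mul (Reg_mul (Reg_pow Reg_X _) (Reg_aM _)) (Reg_Pn _))
  · rw [show 6 * (b + 3) = 6 * b + 18 by omega, show 4 * (b + 3) - 2 = 4 * b + 10 by omega,
      show b + 3 - 1 = b + 2 by omega]
    ring

lemma mdT3i (b : ℕ) : Md (Kg (b + 3) * RatFunc.X ^ (4 * (b + 3) - 4) * (1 - RatFunc.X ^ 2) +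
    Jg (b + 3) * (RatFunc.X ^ (4 * (b + 3) - 2) +
      RatFunc.X ^ (2 * (b + 3) - 2) * (1 - RatFunc.X ^ 4) * Pn (b + 3 - 2)) -
    2 ^ (2 * (b + 3)) *
      (RatFunc.X ^ (6 * (b + 3) - 2) +
        RatFunc.X ^ (4 * (b + 3) - 2) * (1 - RatFunc.X ^ 4) * Pn (b + 3 - 2) +
        RatFunc.X ^ (4 * (b + 3) - 2) * (1 - RatFunc.X ^ 2) * Pn (b + 3 - 1))) := by
  refine ⟨Kg (b + 3) * RatFunc.X ^ (4 * b + 4) * (1 - RatFunc.X ^ 2) +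
    Jg (b + 3) * (RatFunc.X ^ (4 * b + 6) +
      RatFunc.X ^ (2 * b) * (1 - RatFunc.X ^ 4) * Pn (b + 1)) -
    2 ^ (2 * (b + 3)) *
      (RatFunc.X ^ (6 * b + 12) +
        RatFunc.X ^ (4 * b + 6) * (1 - RatFunc.X ^ 4) * Pn (b + 1) +
        RatFunc.X ^ (4 * b + 6) * (1 - RatFunc.X ^ 2) * Pn (b + 2)), ?_, ?_⟩
  · rw [cast_d2, show (1 - RatFunc.X ^ 2 : RatFunc ℚ) = aM (1 - X ^ 2) by
      simp [map_sub, map_pow, RatFunc.algebraMap_X]]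
    refine Reg_sub (Reg_add ?_ ?_) ?_
    · exact Reg_mul (Reg_mul (Reg_Kg _) (Reg_pow Reg_X _)) (Reg_aM _)
    · exact Reg_mul (Reg_Jg _) (Reg_add (Reg_pow Reg_X _)
        (Reg_mul (Reg_mul (Reg_pow Reg_X _) (Reg_aM _)) (Reg_Pn _)))
    · refine Reg_mul (Reg_pow (Reg_ofNat 2) _) (Reg_add (Reg_add (Reg_pow Reg_X _) ?_) ?_)
      · exact Reg_mul (Reg_mul (Reg_pow Reg_X _) (Reg_aM _)) (Reg_Pn _)
      · exact Reg_mul (Reg_mul (Reg_pow Reg_X _) (Reg_aM _)) (Reg_Pn _)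
  · rw [show 4 * (b + 3) - 4 = 4 * b + 8 by omega, show 4 * (b + 3) - 2 = 4 * b + 10 by omega,
      show 2 * (b + 3) - 2 = 2 * b + 4 by omega, show 6 * (b + 3) - 2 = 6 * b + 16 by omega,
      show b + 3 - 2 = b + 1 by omega, show b + 3 - 1 = b + 2 by omega]
    ring

lemma md_main (a b : ℕ) : Md (P12 (a + 3) (b + 3)
    - Qg (a + 3) * Qg (b + 3) * (1 + RatFunc.X ^ 2)) := by
  have hsplit : P12 (a + 3) (b + 3) - Qg (a + 3) * Qg (b + 3) * (1 + RatFunc.X ^ 2)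
      = Qg (a + 3) * (1 - RatFunc.X ^ 4) *
          (Jg (b + 3) * RatFunc.X ^ (2 * (b + 3)) / (1 - RatFunc.X ^ 4)
            - (betaT1 (b + 3) + betaT2 (b + 3)))
        + Qg (a + 3) * 2 ^ (2 * (b + 3)) *
            (RatFunc.X ^ (6 * (b + 3)) +
              RatFunc.X ^ (4 * (b + 3) - 2) * (1 - RatFunc.X ^ 4) * Pn (b + 3 - 1))
        + Qg (a + 3) *
            (Kg (b + 3) * RatFunc.X ^ (4 * (b + 3) - 4) * (1 - RatFunc.X ^ 2) +
              Jg (b + 3) * (RatFunc.X ^ (4 * (b + 3) - 2) +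
                RatFunc.X ^ (2 * (b + 3) - 2) * (1 - RatFunc.X ^ 4) * Pn (b + 3 - 2)) -
              2 ^ (2 * (b + 3)) *
                (RatFunc.X ^ (6 * (b + 3) - 2) +
                  RatFunc.X ^ (4 * (b + 3) - 2) * (1 - RatFunc.X ^ 4) * Pn (b + 3 - 2) +
                  RatFunc.X ^ (4 * (b + 3) - 2) * (1 - RatFunc.X ^ 2) * Pn (b + 3 - 1)))
        + RatFunc.X ^ 4 * (Qg (a + 3) * Qg (b + 3) * (2 + RatFunc.X ^ 2))
        + (-(RatFunc.X ^ 4 * (Qg (a + 3) * Qg (b + 3)))) := by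
    rw [P12]; ring
  rw [hsplit]
  have hRd2 : Reg (1 - RatFunc.X ^ 4) := by rw [cast_d2]; exact Reg_aM _
  refine Md_add (Md_add (Md_add (Md_add ?_ ?_) ?_) ?_) ?_
  · exact Md_mul_left (Reg_mul (Reg_Qg _) hRd2) (Md_sub (mdA b) (Md_add (mdB1 b) (mdB2 b)))
  · exact Md_mul_left (Reg_mul (Reg_Qg _) (Reg_pow (Reg_ofNat 2) _)) (mdT2i b)
  · exact Md_mul_left (Reg_Qg _) (mdT3i b)
  · exact ⟨_, Reg_mul (Reg_mul (Reg_Qg _) (Reg_Qg _)) (Reg_add (Reg_ofNat 2)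
      (Reg_pow Reg_X _)), rfl⟩
  · exact Md_neg ⟨_, Reg_mul (Reg_Qg _) (Reg_Qg _), rfl⟩

noncomputable def qlow (g : ℕ) : ℚ[X] := 1 + X ^ 2 + ((2 * g : ℕ) : ℚ[X]) * X ^ 3

lemma md_final (a b : ℕ) : Md (P12 (a + 3) (b + 3)
    - aM (qlow (a + 3) * qlow (b + 3) * (1 + X ^ 2))) := by
  have heq : P12 (a + 3) (b + 3) - aM (qlow (a + 3) * qlow (b + 3) * (1 + X ^ 2))
      = (P12 (a + 3) (b + 3) - Qg (a + 3) * Qg (b + 3) * (1 + RatFunc.X ^ 2))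
        + (Qg (a + 3) - aM (qlow (a + 3))) * (Qg (b + 3) * (1 + RatFunc.X ^ 2))
        + aM (qlow (a + 3)) * ((Qg (b + 3) - aM (qlow (b + 3))) * (1 + RatFunc.X ^ 2)) := by
    rw [map_mul, map_mul, ← cast_d1]; ring
  rw [heq]
  have hR1 : Reg (1 + RatFunc.X ^ 2) := by rw [cast_d1]; exact Reg_aM _
  refine Md_add (Md_add (md_main a b) ?_) ?_
  · exact Md_mul_right (mdQ (a + 3) (by omega)) (Reg_mul (Reg_Qg _) hR1)
  · exact Md_mul_left (Reg_aM _) (Md_mul_right (mdQ (b + 3) (by omega)) hR1)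

lemma coeff3_aux (c₁ c₂ : ℚ) :
    (((1 + X ^ 2 + C c₁ * X ^ 3) * (1 + X ^ 2 + C c₂ * X ^ 3) * (1 + X ^ 2) : ℚ[X])).coeff 3
      = c₁ + c₂ := by
  have hexp : ((1 + X ^ 2 + C c₁ * X ^ 3) * (1 + X ^ 2 + C c₂ * X ^ 3) * (1 + X ^ 2) : ℚ[X])
      = 1 + C 3 * X ^ 2 + C (c₁ + c₂) * X ^ 3 + C 3 * X ^ 4 + C (2 * c₁ + 2 * c₂) * X ^ 5
        + C (1 + c₁ * c₂) * X ^ 6 + C (c₁ + c₂) * X ^ 7 + C (c₁ * c₂) * X ^ 8 := by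
    simp only [map_add, map_mul, map_one, map_ofNat]
    ring
  rw [hexp]
  simp only [coeff_add, coeff_C_mul, coeff_X_pow, coeff_one]
  norm_num


/-- For all integers `g₁, g₂ ≥ 3`, the coefficient of `X³` in the polynomial representing
`P₁₂(g₁,g₂)` is `2(g₁ + g₂)`: the third Betti number of `M₁₂` equals twice the
arithmetic genus of the nodal curve. -/
theorem P12_third_betti (g₁ g₂ : ℕ) (h₁ : 3 ≤ g₁) (h₂ : 3 ≤ g₂) (p : ℚ[X])
    (hp : algebraMap ℚ[X] (RatFunc ℚ) p = P12 g₁ g₂) :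
    p.coeff 3 = 2 * ((g₁ : ℚ) + (g₂ : ℚ)) := by
  obtain ⟨a, rfl⟩ : ∃ a, g₁ = a + 3 := ⟨g₁ - 3, by omega⟩
  obtain ⟨b, rfl⟩ : ∃ b, g₂ = b + 3 := ⟨g₂ - 3, by omega⟩
  set QQ : ℚ[X] := qlow (a + 3) * qlow (b + 3) * (1 + X ^ 2) with hQQ
  obtain ⟨r, hreg, hr⟩ := md_final a b
  obtain ⟨A, B, hB0, hAB⟩ := hreg
  rw [← hp] at hr
  have hpB : aM (p * B) = aM (QQ * B + X ^ 4 * A) := by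
    simp only [map_mul, map_add, map_pow, RatFunc.algebraMap_X]
    linear_combination aM B * hr + RatFunc.X ^ 4 * hAB
  have hPB : p * B = QQ * B + X ^ 4 * A := RatFunc.algebraMap_injective ℚ hpB
  have hdvd : (X : ℚ[X]) ^ 4 ∣ (p - QQ) := by
    refine (Polynomial.prime_X).pow_dvd_of_dvd_mul_right 4
      (by rw [Polynomial.X_dvd_iff]; exact hB0) ⟨A, by linear_combination hPB⟩
  obtain ⟨c, hc⟩ := hdvd
  have h30 : (p - QQ).coeff 3 = 0 := by
    rw [hc, mul_comm, Polynomial.coeff_mul_X_pow']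
    norm_num
  have h3 : p.coeff 3 = QQ.coeff 3 := by
    have := Polynomial.coeff_sub p QQ 3
    rw [h30] at this
    linarith [this.symm]
  rw [h3, hQQ]
  have hcast : ∀ n : ℕ, ((n : ℚ[X])) = C ((n : ℚ)) := fun n => (Polynomial.C_eq_natCast _).symm
  rw [qlow, qlow, hcast, hcast, coeff3_aux]
  push_cast
  ring
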